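/- Every peak function θ_α (α a peak composition of n) annihilates the ideal I = ⟨X_{2m} : m ≥ 1⟩ of NC, under the pairing in which {M_α} is dual to {S^α = h_{α_1}⋯h_{α_ℓ}}; i.e., θ_α(S^β X_{2m} S^γ) = 0 for all compositions β, γ and all m ≥ 1. -/

import Mathlib

open scoped Classical

noncomputable section

/-- `RefinesL fine coarse` : the composition `fine` refines `coarse`. -/
def RefinesL (fine coarse : List ℕ) : Prop :=
  ∃ L : List (List ℕ), [] ∉ L ∧ L.map List.sum = coarse ∧ L.flatten = fine

/-- `β*`: replace every part `β_i > 1` of `β` other than the first by the pair `(1, β_i − 1)`. -/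
def starC : List ℕ → List ℕ
  | [] => []
  | a :: rest => a :: rest.flatMap (fun b => if 1 < b then [1, b - 1] else [b])

/-- The pairing `θ_α(S^δ)`: the coefficient of `M_δ` in `θ_α = ∑_{β* ≼ α} 2^{k(β)} M_β`,
under the duality in which `{M_α}` is dual to `{S^α}`. -/
def θpair (α δ : List ℕ) : ℤ :=
  if RefinesL (starC δ) α then 2 ^ δ.length else 0

/-- The word contributed by `h_i` to `S`-indices: empty for `h_0 = 1`, else the part `i`. -/
def wd (i : ℕ) : List ℕ := if i = 0 then [] else [i]

/-! ### Auxiliary development: prefix sums -/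

/-- `PS l s` : `s` is a (nonempty) prefix sum of `l`. -/
def PS (l : List ℕ) (s : ℕ) : Prop := ∃ k, 0 < k ∧ k ≤ l.length ∧ (l.take k).sum = s

lemma length_le_sum {l : List ℕ} (h : ∀ p ∈ l, 0 < p) : l.length ≤ l.sum := by
  induction l with
  | nil => simp
  | cons a t ih =>
    simp only [List.length_cons, List.sum_cons]
    have ha := h a (by simp)
    have := ih (fun p hp => h p (by simp [hp]))
    omega

lemma ps_le_sum {l : List ℕ} {s : ℕ} (h : PS l s) : s ≤ l.sum := by
  obtain ⟨k, _, _, hs⟩ := h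
  calc s = (l.take k).sum := hs.symm
    _ ≤ (l.take k).sum + (l.drop k).sum := Nat.le_add_right _ _
    _ = l.sum := by rw [← List.sum_append, List.take_append_drop]

lemma ps_pos {l : List ℕ} {s : ℕ} (hl : ∀ p ∈ l, 0 < p) (h : PS l s) : 0 < s := by
  obtain ⟨k, hk, hkl, hs⟩ := h
  have h1 : (l.take k).length ≤ (l.take k).sum :=
    length_le_sum (fun p hp => hl p (List.take_subset k l hp))
  rw [List.length_take] at h1
  omega

lemma ps_nil {s : ℕ} : ¬ PS [] s := by
  rintro ⟨k, hk, hkl, _⟩; simp at hkl; omega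

lemma ps_sum {l : List ℕ} (h : l ≠ []) : PS l l.sum :=
  ⟨l.length, by simpa using List.length_pos_iff.2 h, le_refl _, by simp⟩

lemma ps_append {u v : List ℕ} {s : ℕ} :
    PS (u ++ v) s ↔ PS u s ∨ ∃ q, PS v q ∧ s = u.sum + q := by
  constructor
  · rintro ⟨k, hk, hkl, hs⟩
    rw [List.take_append, List.sum_append] at hs
    rcases le_or_gt k u.length with h | h
    · left
      refine ⟨k, hk, h, ?_⟩
      have : k - u.length = 0 := by omega
      rw [this] at hs; simpa using hs
    · right
      rw [List.take_of_length_le (by omega)] at hs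
      refine ⟨(v.take (k - u.length)).sum, ⟨k - u.length, by omega, ?_, rfl⟩, hs.symm⟩
      rw [List.length_append] at hkl; omega
  · rintro (⟨k, hk, hkl, hs⟩ | ⟨q, ⟨k, hk, hkl, hs⟩, rfl⟩)
    · refine ⟨k, hk, by rw [List.length_append]; omega, ?_⟩
      rw [List.take_append, List.sum_append]
      have : k - u.length = 0 := by omega
      rw [this]; simpa using hs
    · refine ⟨u.length + k, by omega, by rw [List.length_append]; omega, ?_⟩
      rw [List.take_append, List.sum_append,
        List.take_of_length_le (by omega)]
      congr 1
      have : u.length + k - u.length = k := by omega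
      rw [this, hs]

lemma ps_single {a s : ℕ} : PS [a] s ↔ s = a := by
  constructor
  · rintro ⟨k, hk, hkl, hs⟩
    simp at hkl
    have : k = 1 := by omega
    subst this; simpa using hs.symm
  · rintro rfl; exact ⟨1, by omega, by simp, by simp⟩

lemma ps_cons {a : ℕ} {l : List ℕ} {s : ℕ} :
    PS (a :: l) s ↔ s = a ∨ ∃ q, PS l q ∧ s = a + q := by
  have : a :: l = [a] ++ l := rfl
  rw [this, ps_append, ps_single]; simp

lemma sum_take_lt {l : List ℕ} (hl : ∀ p ∈ l, 0 < p) {k1 k2 : ℕ}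
    (h12 : k1 < k2) (h2 : k2 ≤ l.length) : (l.take k1).sum < (l.take k2).sum := by
  have hk2 : k2 = k1 + (k2 - k1) := by omega
  rw [hk2, List.take_add, List.sum_append]
  have hlen : ((l.drop k1).take (k2 - k1)).length = k2 - k1 := by
    rw [List.length_take, List.length_drop]; omega
  have hpos : 0 < ((l.drop k1).take (k2 - k1)).sum := by
    have := length_le_sum (l := (l.drop k1).take (k2 - k1))
      (fun p hp => hl p (List.drop_subset k1 l (List.take_subset _ _ hp)))
    omega
  omega

/-- If `s+1` is a prefix sum of a peak composition `α` and `s` is `0` or a prefix sum,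
then `s+1` is the total sum. -/
lemma consec {α : List ℕ} (hαp : ∀ p ∈ α, 0 < p)
    (hpeak : ∀ i, i + 1 < α.length → 1 < α.getD i 0) {s : ℕ}
    (h1 : PS α (s + 1)) (h0 : s = 0 ∨ PS α s) : s + 1 = α.sum := by
  obtain ⟨k2, hk2, hk2l, hs2⟩ := h1
  have h0' : ∃ k1, k1 ≤ α.length ∧ (α.take k1).sum = s := by
    rcases h0 with rfl | ⟨k1, _, hk1l, hs1⟩
    · exact ⟨0, Nat.zero_le _, by simp⟩
    · exact ⟨k1, hk1l, hs1⟩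
  obtain ⟨k1, hk1l, hs1⟩ := h0'
  have hlt : k1 < k2 := by
    by_contra h
    push_neg at h
    rcases eq_or_lt_of_le h with rfl | h
    · omega
    · have := sum_take_lt hαp h hk1l; omega
  have hk2eq : k2 = k1 + (k2 - k1) := by omega
  have hsplit : (α.take k2).sum = (α.take k1).sum + ((α.drop k1).take (k2 - k1)).sum := by
    conv_lhs => rw [hk2eq, List.take_add]
    rw [List.sum_append]
  have hwsum : ((α.drop k1).take (k2 - k1)).sum = 1 := by omega
  have hwlen : ((α.drop k1).take (k2 - k1)).length = k2 - k1 := by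
    rw [List.length_take, List.length_drop]; omega
  have hwle : ((α.drop k1).take (k2 - k1)).length ≤ 1 := by
    have := length_le_sum (l := (α.drop k1).take (k2 - k1))
      (fun p hp => hαp p (List.drop_subset k1 α (List.take_subset _ _ hp)))
    omega
  have hd : k2 - k1 = 1 := by omega
  have hk1lt : k1 < α.length := by omega
  have hdrop : α.drop k1 = α[k1] :: α.drop (k1 + 1) := List.drop_eq_getElem_cons hk1lt
  have hget : α[k1] = 1 := by
    rw [hd, hdrop] at hwsum
    simp only [List.take_succ_cons, List.take_zero, List.sum_cons, List.sum_nil,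
      Nat.add_zero] at hwsum
    exact hwsum
  have : ¬ (k1 + 1 < α.length) := by
    intro h
    have := hpeak k1 h
    rw [List.getD_eq_getElem α 0 hk1lt, hget] at this
    omega
  have hk2len : k2 = α.length := by omega
  rw [← hs2, hk2len, List.take_of_length_le (le_refl _)]

lemma refines_of : ∀ (coarse fine : List ℕ), (∀ p ∈ fine, 0 < p) → (∀ p ∈ coarse, 0 < p) →
    fine.sum = coarse.sum → (∀ s, PS coarse s → PS fine s) → RefinesL fine coarse := by
  intro coarse
  induction coarse with
  | nil =>
    intro fine hfine _ hsum _
    have : fine = [] := by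
      cases fine with
      | nil => rfl
      | cons a t => exfalso; have := hfine a (by simp); simp at hsum; omega
    exact ⟨[], by simp, by simp, by simp [this]⟩
  | cons a rest ih =>
    intro fine hfine hcoarse hsum hps
    have ha : PS (a :: rest) a := ⟨1, by omega, by simp, by simp⟩
    obtain ⟨k, hk, hkl, hks⟩ := hps a ha
    set u := fine.take k with hu
    set v := fine.drop k with hv
    have huv : fine = u ++ v := (List.take_append_drop k fine).symm
    have hune : u ≠ [] := by
      rw [← List.length_pos_iff, hu, List.length_take]; omega
    have husum : u.sum = a := hks
    have hvsum : v.sum = rest.sum := by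
      have : u.sum + v.sum = a + rest.sum := by
        rw [← List.sum_append, ← huv, hsum]; simp
      omega
    have hvpos : ∀ p ∈ v, 0 < p := fun p hp => hfine p (List.drop_subset _ _ hp)
    have hrestpos : ∀ p ∈ rest, 0 < p := fun p hp => hcoarse p (by simp [hp])
    have hpsv : ∀ s, PS rest s → PS v s := by
      intro s hs
      have hspos : 0 < s := ps_pos hrestpos hs
      have hfs : PS fine (a + s) := hps (a + s) (ps_cons.2 (Or.inr ⟨s, hs, rfl⟩))
      rw [huv, ps_append] at hfs
      rcases hfs with h | ⟨q, hq, hqe⟩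
      · have := ps_le_sum h; omega
      · have : q = s := by omega
        exact this ▸ hq
    obtain ⟨L, hL1, hL2, hL3⟩ := ih v hvpos hrestpos hvsum hpsv
    refine ⟨u :: L, ?_, by simp [hL2, husum], by simp [hL3, ← huv]⟩
    simp only [List.mem_cons]
    rintro (h | h)
    · exact hune h.symm
    · exact hL1 h

lemma refines_iff {fine coarse : List ℕ} (hfine : ∀ p ∈ fine, 0 < p)
    (hcoarse : ∀ p ∈ coarse, 0 < p) :
    RefinesL fine coarse ↔ fine.sum = coarse.sum ∧ ∀ s, PS coarse s → PS fine s := by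
  constructor
  · rintro ⟨L, hL, rfl, rfl⟩
    constructor
    · exact List.sum_flatten
    · rintro s ⟨k, hk, hkl, hs⟩
      rw [List.length_map] at hkl
      have htk : ((L.map List.sum).take k) = (L.take k).map List.sum := List.map_take.symm
      rw [htk] at hs
      have hsum : (L.take k).flatten.sum = s := by rw [List.sum_flatten, hs]
      have hpre : L.flatten = (L.take k).flatten ++ (L.drop k).flatten := by
        rw [← List.flatten_append, List.take_append_drop]
      refine ⟨(L.take k).flatten.length, ?_, ?_, ?_⟩
      · rw [List.length_pos_iff]
        intro hnil
        rw [List.flatten_eq_nil_iff] at hnil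
        have hlen : 0 < (L.take k).length := by rw [List.length_take]; omega
        obtain ⟨x, hx⟩ := List.exists_mem_of_length_pos hlen
        exact hL (hnil x hx ▸ List.take_subset _ _ hx)
      · rw [hpre, List.length_append]; omega
      · rw [hpre, List.take_left, hsum]
  · rintro ⟨hsum, hps⟩
    exact refines_of coarse fine hfine hcoarse hsum hps

/-! ### Prefix sums of `starC` -/

def fC (b : ℕ) : List ℕ := if 1 < b then [1, b - 1] else [b]

lemma sum_fC (b : ℕ) : (fC b).sum = b := by
  unfold fC; split <;> simp <;> omega

lemma sum_flatMap_fC (l : List ℕ) : (l.flatMap fC).sum = l.sum := by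
  induction l with
  | nil => simp
  | cons a t ih => simp [List.flatMap_cons, List.sum_append, ih, sum_fC]

lemma ps_fC {b s : ℕ} (hb : 0 < b) : PS (fC b) s ↔ s = 1 ∨ s = b := by
  unfold fC
  by_cases h : 1 < b
  · simp only [if_pos h]
    constructor
    · intro hs
      rcases ps_cons.1 hs with rfl | ⟨q, hq, rfl⟩
      · exact Or.inl rfl
      · rw [ps_single] at hq; subst hq; right; omega
    · rintro (rfl | h2)
      · exact ps_cons.2 (Or.inl rfl)
      · exact ps_cons.2 (Or.inr ⟨b - 1, ps_single.2 rfl, by omega⟩)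
  · simp only [if_neg h]
    rw [ps_single]; omega

lemma ps_flatMap {l : List ℕ} (hl : ∀ p ∈ l, 0 < p) {s : ℕ} :
    PS (l.flatMap fC) s ↔ PS l s ∨ ∃ p, (p = 0 ∨ PS l p) ∧ p < l.sum ∧ s = p + 1 := by
  induction l generalizing s with
  | nil => simp [ps_nil]
  | cons a t ih =>
    have ha : 0 < a := hl a (by simp)
    have ht : ∀ p ∈ t, 0 < p := fun p hp => hl p (by simp [hp])
    rw [List.flatMap_cons, ps_append, sum_fC]
    constructor
    · rintro (hfa | ⟨q, hq, rfl⟩)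
      · rcases (ps_fC ha).1 hfa with rfl | rfl
        · right; exact ⟨0, Or.inl rfl, by simp; omega, by omega⟩
        · left; exact ps_cons.2 (Or.inl rfl)
      · rcases (ih ht).1 hq with hq' | ⟨p, hp0, hps, rfl⟩
        · left; exact ps_cons.2 (Or.inr ⟨q, hq', rfl⟩)
        · rcases hp0 with rfl | hp
          · right; exact ⟨a, Or.inr (ps_cons.2 (Or.inl rfl)), by simp; omega, by omega⟩
          · right
            exact ⟨a + p, Or.inr (ps_cons.2 (Or.inr ⟨p, hp, rfl⟩)), by simp; omega, by omega⟩
    · rintro (hs | ⟨p, hp0, hps, rfl⟩)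
      · rcases ps_cons.1 hs with rfl | ⟨q, hq, rfl⟩
        · left; exact (ps_fC ha).2 (Or.inr rfl)
        · right; exact ⟨q, (ih ht).2 (Or.inl hq), rfl⟩
      · rcases hp0 with rfl | hp
        · left; exact (ps_fC ha).2 (Or.inl (by omega))
        · rcases ps_cons.1 hp with rfl | ⟨q, hq, rfl⟩
          · right
            refine ⟨0 + 1, (ih ht).2 (Or.inr ⟨0, Or.inl rfl, ?_, rfl⟩), by omega⟩
            simp at hps; omega
          · right
            refine ⟨q + 1, (ih ht).2 (Or.inr ⟨q, Or.inr hq, ?_, rfl⟩), by omega⟩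
            simp at hps; omega

lemma ps_starC {l : List ℕ} (hl : ∀ p ∈ l, 0 < p) {s : ℕ} :
    PS (starC l) s ↔ PS l s ∨ ∃ p, PS l p ∧ p < l.sum ∧ s = p + 1 := by
  cases l with
  | nil => simp [starC, ps_nil]
  | cons a t =>
    have ha : 0 < a := hl a (by simp)
    have ht : ∀ p ∈ t, 0 < p := fun p hp => hl p (by simp [hp])
    show PS (a :: t.flatMap fC) s ↔ _
    constructor
    · intro h
      rcases ps_cons.1 h with rfl | ⟨q, hq, rfl⟩
      · left; exact ps_cons.2 (Or.inl rfl)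
      · rcases (ps_flatMap ht).1 hq with hq' | ⟨p, hp0, hps, rfl⟩
        · left; exact ps_cons.2 (Or.inr ⟨q, hq', rfl⟩)
        · rcases hp0 with rfl | hp
          · right; exact ⟨a, ps_cons.2 (Or.inl rfl), by simp; omega, by omega⟩
          · right; exact ⟨a + p, ps_cons.2 (Or.inr ⟨p, hp, rfl⟩), by simp; omega, by omega⟩
    · rintro (hs | ⟨p, hp, hps, rfl⟩)
      · rcases ps_cons.1 hs with rfl | ⟨q, hq, rfl⟩
        · exact ps_cons.2 (Or.inl rfl)
        · exact ps_cons.2 (Or.inr ⟨q, (ps_flatMap ht).2 (Or.inl hq), rfl⟩)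
      · rcases ps_cons.1 hp with rfl | ⟨q, hq, rfl⟩
        · refine ps_cons.2 (Or.inr ⟨1, (ps_flatMap ht).2
            (Or.inr ⟨0, Or.inl rfl, ?_, by omega⟩), by omega⟩)
          simp at hps; omega
        · refine ps_cons.2 (Or.inr ⟨q + 1, (ps_flatMap ht).2
            (Or.inr ⟨q, Or.inr hq, ?_, rfl⟩), by omega⟩)
          simp at hps; omega

lemma starC_pos {l : List ℕ} (hl : ∀ p ∈ l, 0 < p) : ∀ p ∈ starC l, 0 < p := by
  cases l with
  | nil => simp [starC]
  | cons a t =>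
    intro p hp
    show 0 < p
    rcases List.mem_cons.1 hp with rfl | hp
    · exact hl p (by simp)
    · rw [List.mem_flatMap] at hp
      obtain ⟨b, hb, hpb⟩ := hp
      have hbpos : 0 < b := hl b (by simp [hb])
      by_cases h1 : 1 < b <;> simp [h1] at hpb <;> rcases hpb with rfl | rfl <;> omega

lemma starC_sum (l : List ℕ) : (starC l).sum = l.sum := by
  cases l with
  | nil => rfl
  | cons a t =>
    show (a :: t.flatMap fC).sum = _
    simp [sum_flatMap_fC]

/-! ### The words `β ++ wd i ++ wd (2m−i) ++ γ` -/

lemma wd_sum {n : ℕ} : (wd n).sum = n := by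
  unfold wd; split <;> rename_i h <;> simp [h]

lemma wd_pos {n : ℕ} : ∀ p ∈ wd n, 0 < p := by
  unfold wd; split
  · simp
  · rename_i h; intro p hp; simp at hp; omega

lemma ps_wd {n q : ℕ} : PS (wd n) q ↔ 0 < n ∧ q = n := by
  unfold wd
  split
  · rename_i h; subst h; simp [ps_nil]
  · rename_i h; rw [ps_single]; omega

lemma wd_zero : wd 0 = [] := rfl

lemma wd_ne {n : ℕ} (h : n ≠ 0) : wd n = [n] := by unfold wd; rw [if_neg h]

def Aset (β γ : List ℕ) (m : ℕ) (s : ℕ) : Prop :=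
  PS β s ∨ s = β.sum + 2 * m ∨ ∃ q, PS γ q ∧ s = β.sum + 2 * m + q

def Qset (β γ : List ℕ) (m : ℕ) (s : ℕ) : Prop :=
  Aset β γ m s ∨ ∃ p, Aset β γ m p ∧ p < β.sum + 2 * m + γ.sum ∧ s = p + 1

lemma delta_pos {β γ : List ℕ} (hβ : ∀ p ∈ β, 0 < p) (hγ : ∀ p ∈ γ, 0 < p) (i j : ℕ) :
    ∀ p ∈ β ++ wd i ++ wd j ++ γ, 0 < p := by
  intro p hp
  simp only [List.mem_append] at hp
  rcases hp with ((hp | hp) | hp) | hp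
  exacts [hβ p hp, wd_pos p hp, wd_pos p hp, hγ p hp]

lemma delta_sum {β γ : List ℕ} {m i : ℕ} (hi : i ≤ 2 * m) :
    (β ++ wd i ++ wd (2 * m - i) ++ γ).sum = β.sum + 2 * m + γ.sum := by
  simp only [List.sum_append, wd_sum]; omega

lemma delta_ps {β γ : List ℕ} {m i : ℕ} (hm : 1 ≤ m) (hi : i ≤ 2 * m) {s : ℕ} :
    PS (β ++ wd i ++ wd (2 * m - i) ++ γ) s ↔
      Aset β γ m s ∨ (0 < i ∧ i < 2 * m ∧ s = β.sum + i) := by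
  unfold Aset
  constructor
  · intro h
    rcases ps_append.1 h with h | ⟨q, hq, hs⟩
    · rcases ps_append.1 h with h | ⟨q, hq, hs⟩
      · rcases ps_append.1 h with h | ⟨q, hq, hs⟩
        · exact Or.inl (Or.inl h)
        · obtain ⟨hi0, hqe⟩ := ps_wd.1 hq
          rcases Nat.lt_or_ge i (2 * m) with h2 | h2
          · exact Or.inr ⟨hi0, h2, by omega⟩
          · exact Or.inl (Or.inr (Or.inl (by omega)))
      · obtain ⟨hi2, hqe⟩ := ps_wd.1 hq
        rw [List.sum_append, wd_sum] at hs
        exact Or.inl (Or.inr (Or.inl (by omega)))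
    · rw [List.sum_append, List.sum_append, wd_sum, wd_sum] at hs
      exact Or.inl (Or.inr (Or.inr ⟨q, hq, by omega⟩))
  · rintro ((hb | hs2m | ⟨q, hq, rfl⟩) | ⟨h1, h2, rfl⟩)
    · exact ps_append.2 (Or.inl (ps_append.2 (Or.inl (ps_append.2 (Or.inl hb)))))
    · rcases Nat.lt_or_ge i (2 * m) with h2 | h2
      · apply ps_append.2; left
        apply ps_append.2; right
        refine ⟨2 * m - i, ps_wd.2 ⟨by omega, rfl⟩, ?_⟩
        rw [List.sum_append, wd_sum]; omega
      · apply ps_append.2; left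
        apply ps_append.2; left
        apply ps_append.2; right
        exact ⟨i, ps_wd.2 ⟨by omega, rfl⟩, by omega⟩
    · apply ps_append.2; right
      refine ⟨q, hq, ?_⟩
      rw [List.sum_append, List.sum_append, wd_sum, wd_sum]; omega
    · apply ps_append.2; left
      apply ps_append.2; left
      apply ps_append.2; right
      exact ⟨i, ps_wd.2 ⟨h1, rfl⟩, rfl⟩

lemma theta_eval (α β γ : List ℕ) (m i : ℕ) (hαp : ∀ p ∈ α, 0 < p)
    (hβ : ∀ p ∈ β, 0 < p) (hγ : ∀ p ∈ γ, 0 < p) (hm : 1 ≤ m) (hi : i ≤ 2 * m) :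
    θpair α (β ++ wd i ++ wd (2 * m - i) ++ γ) =
      if α.sum = β.sum + 2 * m + γ.sum ∧
          (∀ s, PS α s → (Qset β γ m s ∨
            (0 < i ∧ i < 2 * m ∧ (s = β.sum + i ∨ s = β.sum + i + 1))))
      then 2 ^ (β ++ wd i ++ wd (2 * m - i) ++ γ).length else 0 := by
  have hδp : ∀ p ∈ β ++ wd i ++ wd (2 * m - i) ++ γ, 0 < p := delta_pos hβ hγ _ _
  have hsum := delta_sum (β := β) (γ := γ) hi
  have hiff : RefinesL (starC (β ++ wd i ++ wd (2 * m - i) ++ γ)) α ↔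
      (α.sum = β.sum + 2 * m + γ.sum ∧
        (∀ s, PS α s → (Qset β γ m s ∨
          (0 < i ∧ i < 2 * m ∧ (s = β.sum + i ∨ s = β.sum + i + 1))))) := by
    rw [refines_iff (starC_pos hδp) hαp, starC_sum, hsum]
    apply and_congr
    · exact eq_comm
    · apply forall_congr'; intro s; apply imp_congr_right; intro _
      rw [ps_starC hδp, hsum]
      simp only [delta_ps hm hi]
      unfold Qset
      constructor
      · rintro ((hA | ⟨h1, h2, rfl⟩) | ⟨p, (hA | ⟨h1, h2, rfl⟩), hpT, rfl⟩)
        · exact Or.inl (Or.inl hA)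
        · exact Or.inr ⟨h1, h2, Or.inl rfl⟩
        · exact Or.inl (Or.inr ⟨p, hA, hpT, rfl⟩)
        · exact Or.inr ⟨h1, h2, Or.inr rfl⟩
      · rintro ((hA | ⟨p, hA, hpT, rfl⟩) | ⟨h1, h2, (rfl | rfl)⟩)
        · exact Or.inl (Or.inl hA)
        · exact Or.inr ⟨p, Or.inl hA, hpT, rfl⟩
        · exact Or.inl (Or.inr ⟨h1, h2, rfl⟩)
        · exact Or.inr ⟨β.sum + i, Or.inr ⟨h1, h2, rfl⟩, by omega, rfl⟩
  simp only [θpair]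
  exact if_congr hiff rfl rfl

lemma negsum (m : ℕ) : ∑ i ∈ Finset.range (2 * m + 1), (-1 : ℤ) ^ i = 1 := by
  induction m with
  | zero => simp
  | succ n ih =>
    have h : 2 * (n + 1) + 1 = (2 * n + 1) + 1 + 1 := by ring
    rw [h, Finset.sum_range_succ, Finset.sum_range_succ, ih,
      pow_succ ((-1 : ℤ)) (2 * n + 1)]
    have h2 : (-1 : ℤ) ^ (2 * n + 1) = -1 := by
      rw [pow_succ, pow_mul]; norm_num
    rw [h2]; ring

theorem stmt16 (α : List ℕ) (hαp : ∀ p ∈ α, 0 < p)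
    (hpeak : ∀ i, i + 1 < α.length → 1 < α.getD i 0)
    (β γ : List ℕ) (hβ : ∀ p ∈ β, 0 < p) (hγ : ∀ p ∈ γ, 0 < p)
    (m : ℕ) (hm : 1 ≤ m) :
    ∑ i ∈ Finset.range (2 * m + 1),
      (-1 : ℤ) ^ i * θpair α (β ++ wd i ++ wd (2 * m - i) ++ γ) = 0 := by
  have hpow : (2 : ℤ) ^ (β.length + γ.length + 2)
      = 2 * 2 ^ (β.length + γ.length + 1) := by
    rw [show β.length + γ.length + 2 = (β.length + γ.length + 1) + 1 from rfl, pow_succ]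
    ring
  by_cases hT : α.sum = β.sum + 2 * m + γ.sum
  · by_cases hQ : ∀ s, PS α s → Qset β γ m s
    · -- all conditions hold; the alternating sum of sizes vanishes
      have hterm : ∀ i ∈ Finset.range (2 * m + 1),
          (-1 : ℤ) ^ i * θpair α (β ++ wd i ++ wd (2 * m - i) ++ γ) =
          (-1 : ℤ) ^ i * 2 ^ (β.length + γ.length + 2)
            - (if i = 0 then (2 : ℤ) ^ (β.length + γ.length + 1) else 0)
            - (if i = 2 * m then (2 : ℤ) ^ (β.length + γ.length + 1) else 0) := by
        intro i hi
        have hi' : i ≤ 2 * m := by simp at hi; omega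
        rw [theta_eval α β γ m i hαp hβ hγ hm hi',
          if_pos ⟨hT, fun s hs => Or.inl (hQ s hs)⟩]
        by_cases h0 : i = 0
        · subst h0
          have hlen : (β ++ wd 0 ++ wd (2 * m - 0) ++ γ).length
              = β.length + γ.length + 1 := by
            simp only [wd_zero, wd_ne (show 2 * m - 0 ≠ 0 by omega), List.length_append,
              List.length_nil, List.length_cons]
            omega
          rw [hlen, if_pos rfl, if_neg (show ¬(0 = 2 * m) by omega), hpow]
          ring
        · by_cases h2 : i = 2 * m
          · subst h2
            have hlen : (β ++ wd (2 * m) ++ wd (2 * m - 2 * m) ++ γ).length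
                = β.length + γ.length + 1 := by
              simp only [show 2 * m - 2 * m = 0 by omega, wd_zero,
                wd_ne (show 2 * m ≠ 0 by omega), List.length_append,
                List.length_nil, List.length_cons]
              omega
            have hneg : (-1 : ℤ) ^ (2 * m) = 1 := by rw [pow_mul]; norm_num
            rw [hlen, if_neg (show ¬(2 * m = 0) by omega), if_pos rfl, hneg, hpow]
            ring
          · have hlen : (β ++ wd i ++ wd (2 * m - i) ++ γ).length
                = β.length + γ.length + 2 := by
              simp only [wd_ne h0, wd_ne (show 2 * m - i ≠ 0 by omega), List.length_append,
                List.length_nil, List.length_cons]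
              omega
            rw [hlen, if_neg h0, if_neg h2]
            ring
      rw [Finset.sum_congr rfl hterm, Finset.sum_sub_distrib, Finset.sum_sub_distrib,
        ← Finset.sum_mul, negsum, Finset.sum_ite_eq', Finset.sum_ite_eq',
        if_pos (Finset.mem_range.2 (by omega : 0 < 2 * m + 1)),
        if_pos (Finset.mem_range.2 (by omega : 2 * m < 2 * m + 1)), hpow]
      ring
    · push_neg at hQ
      obtain ⟨s0, hs0, hs0Q⟩ := hQ
      have qT : Qset β γ m (β.sum + 2 * m + γ.sum) := by
        by_cases hγe : γ = []
        · subst hγe; left; right; left; simp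
        · left; right; right; exact ⟨γ.sum, ps_sum hγe, rfl⟩
      have hne2m : s0 ≠ β.sum + 2 * m := by
        intro h
        exact hs0Q (by rw [h]; exact Or.inl (Or.inr (Or.inl rfl)))
      have hne1 : s0 ≠ β.sum + 1 := by
        intro h
        by_cases hβe : β = []
        · have hβ0 : β.sum = 0 := by rw [hβe]; rfl
          have h1 : PS α (0 + 1) := by
            have hh : s0 = 0 + 1 := by omega
            rwa [hh] at hs0
          have h2 := consec hαp hpeak h1 (Or.inl rfl)
          omega
        · exact hs0Q (by
            rw [h]
            exact Or.inr ⟨β.sum, Or.inl (ps_sum hβe), by omega, rfl⟩)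
      by_cases hcase : β.sum + 2 ≤ s0 ∧ s0 ≤ β.sum + 2 * m - 1
      · -- two consecutive interior terms, which cancel
        obtain ⟨j, hj⟩ : ∃ j, s0 = β.sum + j + 2 := ⟨s0 - β.sum - 2, by omega⟩
        have hja : j + 1 < 2 * m := by omega
        have hjb : j + 2 < 2 * m := by omega
        have hθa : θpair α (β ++ wd (j + 1) ++ wd (2 * m - (j + 1)) ++ γ) =
            (if α.sum = β.sum + 2 * m + γ.sum ∧
                (∀ s, PS α s → (Qset β γ m s ∨ s = s0))
             then 2 ^ (β.length + γ.length + 2) else 0) := by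
          rw [theta_eval α β γ m (j + 1) hαp hβ hγ hm (by omega)]
          have hlen : (β ++ wd (j + 1) ++ wd (2 * m - (j + 1)) ++ γ).length
              = β.length + γ.length + 2 := by
            simp only [wd_ne (show j + 1 ≠ 0 by omega),
              wd_ne (show 2 * m - (j + 1) ≠ 0 by omega), List.length_append,
              List.length_nil, List.length_cons]
            omega
          rw [hlen]
          apply if_congr _ rfl rfl
          apply and_congr Iff.rfl
          apply forall_congr'; intro s; apply imp_congr_right; intro hsPS
          constructor
          · rintro (hq | ⟨-, -, (h | h)⟩)
            · exact Or.inl hq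
            · exfalso
              have h1 : PS α (β.sum + (j + 1) + 1) := by
                have hh : s0 = β.sum + (j + 1) + 1 := by omega
                rwa [hh] at hs0
              have h2 := consec hαp hpeak h1 (Or.inr (h ▸ hsPS))
              refine hs0Q ?_
              have hh : s0 = β.sum + 2 * m + γ.sum := by omega
              rw [hh]; exact qT
            · exact Or.inr (by omega)
          · rintro (hq | rfl)
            · exact Or.inl hq
            · exact Or.inr ⟨by omega, hja, Or.inr (by omega)⟩
        have hθb : θpair α (β ++ wd (j + 2) ++ wd (2 * m - (j + 2)) ++ γ) =
            (if α.sum = β.sum + 2 * m + γ.sum ∧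
                (∀ s, PS α s → (Qset β γ m s ∨ s = s0))
             then 2 ^ (β.length + γ.length + 2) else 0) := by
          rw [theta_eval α β γ m (j + 2) hαp hβ hγ hm (by omega)]
          have hlen : (β ++ wd (j + 2) ++ wd (2 * m - (j + 2)) ++ γ).length
              = β.length + γ.length + 2 := by
            simp only [wd_ne (show j + 2 ≠ 0 by omega),
              wd_ne (show 2 * m - (j + 2) ≠ 0 by omega), List.length_append,
              List.length_nil, List.length_cons]
            omega
          rw [hlen]
          apply if_congr _ rfl rfl
          apply and_congr Iff.rfl
          apply forall_congr'; intro s; apply imp_congr_right; intro hsPS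
          constructor
          · rintro (hq | ⟨-, -, (h | h)⟩)
            · exact Or.inl hq
            · exact Or.inr (by omega)
            · left
              have h1 : PS α (s0 + 1) := by
                have hh : s = s0 + 1 := by omega
                rwa [hh] at hsPS
              have h2 := consec hαp hpeak h1 (Or.inr hs0)
              have hh : s = β.sum + 2 * m + γ.sum := by omega
              rw [hh]; exact qT
          · rintro (hq | rfl)
            · exact Or.inl hq
            · exact Or.inr ⟨by omega, hjb, Or.inl (by omega)⟩
        have hvan : ∀ i ∈ Finset.range (2 * m + 1), i ≠ j + 1 → i ≠ j + 2 →
            (-1 : ℤ) ^ i * θpair α (β ++ wd i ++ wd (2 * m - i) ++ γ) = 0 := by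
          intro i hi ha hb
          have hi' : i ≤ 2 * m := by simp at hi; omega
          rw [theta_eval α β γ m i hαp hβ hγ hm hi', if_neg, mul_zero]
          rintro ⟨-, hall⟩
          rcases hall s0 hs0 with hq | ⟨h1, h2, h3⟩
          · exact hs0Q hq
          · omega
        have hsplit : ∀ i ∈ Finset.range (2 * m + 1),
            (-1 : ℤ) ^ i * θpair α (β ++ wd i ++ wd (2 * m - i) ++ γ) =
            (if i = j + 1 then
              (-1 : ℤ) ^ (j + 1) * θpair α (β ++ wd (j + 1) ++ wd (2 * m - (j + 1)) ++ γ)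
             else 0)
            + (if i = j + 2 then
              (-1 : ℤ) ^ (j + 2) * θpair α (β ++ wd (j + 2) ++ wd (2 * m - (j + 2)) ++ γ)
             else 0) := by
          intro i hi
          by_cases ha : i = j + 1
          · subst ha; rw [if_pos rfl, if_neg (by omega)]; ring
          · by_cases hb : i = j + 2
            · subst hb; rw [if_neg (by omega), if_pos rfl]; ring
            · rw [if_neg ha, if_neg hb, hvan i hi ha hb]; ring
        rw [Finset.sum_congr rfl hsplit, Finset.sum_add_distrib,
          Finset.sum_ite_eq', Finset.sum_ite_eq',
          if_pos (Finset.mem_range.2 (by omega : j + 1 < 2 * m + 1)),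
          if_pos (Finset.mem_range.2 (by omega : j + 2 < 2 * m + 1)),
          hθa, hθb]
        have hp : (-1 : ℤ) ^ (j + 2) = -((-1 : ℤ) ^ (j + 1)) := by
          rw [show j + 2 = (j + 1) + 1 from rfl, pow_succ]; ring
        rw [hp]; ring
      · -- every term vanishes
        apply Finset.sum_eq_zero
        intro i hi
        have hi' : i ≤ 2 * m := by simp at hi; omega
        rw [theta_eval α β γ m i hαp hβ hγ hm hi', if_neg, mul_zero]
        rintro ⟨-, hall⟩
        rcases hall s0 hs0 with hq | ⟨h1, h2, h3⟩
        · exact hs0Q hq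
        · omega
  · apply Finset.sum_eq_zero
    intro i hi
    have hi' : i ≤ 2 * m := by simp at hi; omega
    rw [theta_eval α β γ m i hαp hβ hγ hm hi', if_neg (fun h => hT h.1), mul_zero]

end
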